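/- arXiv:2303.09168 — 4 statements merged into one kernel-verified Lean document; each statement's English description precedes it below -/
import Mathlib

section
/- Let R be a local ring (with 2 invertible) and (C,⋆,q) a para-octonion algebra over R((t)). If L is a self-dual R[[t]]-lattice in C with para-unit e ∈ L and q(e) = 1, then writing e = e₁ + e₂ where e₁, e₂ are the components of e in complementary halves of a hyperbolic basis with q(e₁) = q(e₂) = 0, one has: e₁⋆e₁ = e₂, e₂⋆e₂ = e₁, e₁⋆e₂ = e₂⋆e₁ = 0, and ⟨e₁,e₂⟩ = 1. -/
open QuadraticMap

/-- Let `R` be a local ring with `2` invertible and `(C,⋆,q)` a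
para-octonion algebra (an 8-dimensional symmetric composition algebra with para-unit `e`)
over `R((t))`.  If `L` is a self-dual `R[[t]]`-lattice in `C` with `e ∈ L` and `q(e) = 1`,
then writing `e = e₁ + e₂` with `q(e₁) = q(e₂) = 0`, one has `e₁⋆e₁ = e₂`, `e₂⋆e₂ = e₁`,
`e₁⋆e₂ = e₂⋆e₁ = 0`, and `⟨e₁,e₂⟩ = 1`. -/
theorem para_unit_hyperbolic_decomposition
    (R : Type*) [CommRing R] [IsLocalRing R] [Invertible (2 : R)]
    (C : Type*) [NonUnitalNonAssocRing C] [Module (LaurentSeries R) C]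
    [SMulCommClass (LaurentSeries R) C C] [IsScalarTower (LaurentSeries R) C C]
    [Module (PowerSeries R) C] [IsScalarTower (PowerSeries R) (LaurentSeries R) C]
    (q : QuadraticForm (LaurentSeries R) C)
    (hnd : LinearMap.BilinForm.Nondegenerate (polarBilin q))
    (hdim : Module.finrank (LaurentSeries R) C = 8)
    -- `(C,⋆,q)` is a symmetric composition algebra:
    (hq : ∀ x y : C, q (x * y) = q x * q y)
    (hsym : ∀ x y z : C, polar q (x * y) z = polar q (y * z) x)
    -- with para-unit `e`:
    (e : C) (hee : e * e = e)
    (hpara : ∀ x : C, polar q x e = 0 → e * x = -x ∧ x * e = -x)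
    -- `L` is a self-dual `R[[t]]`-lattice containing `e`:
    (L : Submodule (PowerSeries R) C)
    (hL : Submodule.FG L)
    (hsd : {x : C | ∀ y ∈ L, polar q x y ∈
        Set.range (algebraMap (PowerSeries R) (LaurentSeries R))} = (L : Set C))
    (heL : e ∈ L) (hqe : q e = 1)
    -- the hyperbolic components of `e`:
    (e₁ e₂ : C) (hsum : e = e₁ + e₂) (hq1 : q e₁ = 0) (hq2 : q e₂ = 0) :
    e₁ * e₁ = e₂ ∧ e₂ * e₂ = e₁ ∧ e₁ * e₂ = 0 ∧ e₂ * e₁ = 0 ∧ polar q e₁ e₂ = 1 := by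
  -- `2` is invertible in `K = R((t))`
  have h2 : (2 : LaurentSeries R) * (algebraMap R (LaurentSeries R) (⅟2)) = 1 := by
    rw [show (2 : LaurentSeries R) = algebraMap R (LaurentSeries R) 2 by rw [map_ofNat],
      ← map_mul, mul_invOf_self, map_one]
  -- Key identity: x * (y * x) = q x • y
  have KI : ∀ x y : C, x * (y * x) = q x • y := by
    intro x y
    have hpol : ∀ z : C, polar q (x * (y * x)) z = polar q (q x • y) z := by
      intro z
      have comp : polar q (z * x) (y * x) = polar q z y * q x := by
        simp only [QuadraticMap.polar, ← add_mul, hq]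
        ring
      rw [hsym x (y * x) z, hsym (y * x) z x, comp, polar_smul_left, polar_comm (⇑q) z y, smul_eq_mul]
      ring
    have hz : ∀ z : C, polarBilin q (x * (y * x) - q x • y) z = 0 := by
      intro z
      rw [_root_.map_sub, LinearMap.sub_apply, polarBilin_apply_apply, polarBilin_apply_apply,
        hpol z, sub_self]
    exact sub_eq_zero.mp (hnd.1 _ hz)
  -- multiplication by the para-unit
  have emul : ∀ x : C, e * x = polar q x e • e - x ∧ x * e = polar q x e • e - x := by
    intro x
    set lam : LaurentSeries R := algebraMap R (LaurentSeries R) (⅟2) * polar q x e with hlam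
    have hl : lam + lam = polar q x e := by
      rw [hlam]; linear_combination polar q x e * h2
    have hx0 : polar q (x - lam • e) e = 0 := by
      rw [polar_sub_left, polar_smul_left, polar_self, hqe]
      simp only [smul_eq_mul, nsmul_eq_mul, Nat.cast_ofNat, mul_one]
      rw [hlam]
      linear_combination (- polar q x e) * h2
    have hp := hpara _ hx0
    have hdecomp : x = (x - lam • e) + lam • e := by abel
    constructor
    · calc e * x = e * ((x - lam • e) + lam • e) := by rw [← hdecomp]
        _ = e * (x - lam • e) + lam • (e * e) := by rw [mul_add, mul_smul_comm]
        _ = -(x - lam • e) + lam • e := by rw [hp.1, hee]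
        _ = (lam + lam) • e - x := by rw [add_smul]; abel
        _ = polar q x e • e - x := by rw [hl]
    · calc x * e = ((x - lam • e) + lam • e) * e := by rw [← hdecomp]
        _ = (x - lam • e) * e + lam • (e * e) := by rw [add_mul, smul_mul_assoc]
        _ = -(x - lam • e) + lam • e := by rw [hp.2, hee]
        _ = (lam + lam) • e - x := by rw [add_smul]; abel
        _ = polar q x e • e - x := by rw [hl]
  -- polar values
  have pe12 : polar q e₁ e₂ = 1 := by
    simp only [QuadraticMap.polar, ← hsum, hqe, hq1, hq2]; ring
  have p1e : polar q e₁ e = 1 := by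
    rw [hsum, polar_add_right, polar_self, hq1, pe12]; simp
  have p2e : polar q e₂ e = 1 := by
    rw [hsum, polar_add_right, polar_comm (⇑q) e₂ e₁, pe12, polar_self, hq2]; simp
  -- products with the para-unit
  have ee1 : e * e₁ = e₂ := by
    rw [(emul e₁).1, p1e, one_smul, hsum]; abel
  have e1e : e₁ * e = e₂ := by
    rw [(emul e₁).2, p1e, one_smul, hsum]; abel
  have ee2 : e * e₂ = e₁ := by
    rw [(emul e₂).1, p2e, one_smul, hsum]; abel
  have e2e : e₂ * e = e₁ := by
    rw [(emul e₂).2, p2e, one_smul, hsum]; abel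
  -- the cross products vanish
  have b0 : e₁ * e₂ = 0 := by
    have h := KI e₁ e
    rw [ee1, hq1, zero_smul] at h
    exact h
  have d0 : e₂ * e₁ = 0 := by
    have h := KI e₂ e
    rw [ee2, hq2, zero_smul] at h
    exact h
  -- q (eᵢ + e) = 2
  have hq1e : q (e₁ + e) = 2 := by
    have hp := p1e
    simp only [QuadraticMap.polar] at hp
    linear_combination hp + hq1 + hqe
  have hq2e : q (e₂ + e) = 2 := by
    have hp := p2e
    simp only [QuadraticMap.polar] at hp
    linear_combination hp + hq2 + hqe
  have two_smul' : ∀ x : C, (2 : LaurentSeries R) • x = x + x := by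
    intro x
    rw [show (2 : LaurentSeries R) = 1 + 1 by norm_num, add_smul, one_smul]
  -- e₁ * e₁ = e₂
  have k1 : e₁ * (e₁ * e₁) = 0 := by
    have h := KI e₁ e₁; rw [hq1, zero_smul] at h; exact h
  have hEa : e * (e₁ * e₁) = e₁ := by
    have h := KI (e₁ + e) e₁
    rw [mul_add, e1e, add_mul, mul_add, mul_add, b0, ee2, k1, hq1e, two_smul',
      zero_add, zero_add] at h
    exact add_right_cancel h
  have pae : polar q (e₁ * e₁) e = 1 := by
    rw [hsym e₁ e₁ e, e1e, polar_comm (⇑q) e₂ e₁, pe12]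
  have ha : e₁ * e₁ = e₂ := by
    have h := (emul (e₁ * e₁)).1
    rw [hEa, pae, one_smul, hsum, eq_sub_iff_add_eq] at h
    -- h : e₁ + e₁ * e₁ = e₁ + e₂
    exact add_left_cancel h
  -- e₂ * e₂ = e₁
  have k2 : e₂ * (e₂ * e₂) = 0 := by
    have h := KI e₂ e₂; rw [hq2, zero_smul] at h; exact h
  have hEc : e * (e₂ * e₂) = e₂ := by
    have h := KI (e₂ + e) e₂
    rw [mul_add, e2e, add_mul, mul_add, mul_add, d0, ee1, k2, hq2e, two_smul',
      zero_add, zero_add] at h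
    exact add_right_cancel h
  have pce : polar q (e₂ * e₂) e = 1 := by
    rw [hsym e₂ e₂ e, e2e, pe12]
  have hc : e₂ * e₂ = e₁ := by
    have h := (emul (e₂ * e₂)).1
    rw [hEc, pce, one_smul, hsum, eq_sub_iff_add_eq] at h
    -- h : e₂ + e₂ * e₂ = e₁ + e₂
    rw [show e₁ + e₂ = e₂ + e₁ by abel] at h
    exact add_left_cancel h
  exact ⟨ha, hc, b0, d0, pe12⟩
end

section
/- Let (S,⋆,q) be a symmetric composition algebra with idempotent-like pair e₁, e₂ satisfying e₁⋆e₁=e₂, e₂⋆e₂=e₁, e₁⋆e₂=e₂⋆e₁=0, q(e₁)=q(e₂)=0, ⟨e₁,e₂⟩=1. Let L₀ = {x : ⟨x,e₁⟩ = ⟨x,e₂⟩ = 0} and Lᵢ = L₀⋆eᵢ. Then L₁ ⊆ L₀, L₂ ⊆ L₀, e₁⋆L₁ = 0, L₁⋆e₂ = 0, e₂⋆L₂ = 0, and L₂⋆e₁ = 0. -/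
open QuadraticMap

/-- With `L₀ = {x : ⟨x,e₁⟩ = ⟨x,e₂⟩ = 0}` and `Lᵢ = L₀⋆eᵢ`:
`L₁ ⊆ L₀`, `L₂ ⊆ L₀`, `e₁⋆L₁ = 0`, `L₁⋆e₂ = 0`, `e₂⋆L₂ = 0`, `L₂⋆e₁ = 0`. -/
theorem para_hyperbolic_pair_subspaces (F S : Type*) [Field F] [NonUnitalNonAssocRing S] [Module F S]
    [SMulCommClass F S S] [IsScalarTower F S S]
    (h2 : (2 : F) ≠ 0) (q : QuadraticForm F S)
    (hnd : LinearMap.BilinForm.Nondegenerate (polarBilin q))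
    (hq : ∀ x y : S, q (x * y) = q x * q y)
    (hsym : ∀ x y z : S, polar q (x * y) z = polar q (y * z) x)
    (e₁ e₂ : S) (h11 : e₁ * e₁ = e₂) (h22 : e₂ * e₂ = e₁)
    (h12 : e₁ * e₂ = 0) (h21 : e₂ * e₁ = 0)
    (hq1 : q e₁ = 0) (hq2 : q e₂ = 0) (hpol : polar q e₁ e₂ = 1) :
    (∀ x ∈ (fun z => z * e₁) '' {x : S | polar q x e₁ = 0 ∧ polar q x e₂ = 0},
        (polar q x e₁ = 0 ∧ polar q x e₂ = 0) ∧ e₁ * x = 0 ∧ x * e₂ = 0) ∧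
    (∀ x ∈ (fun z => z * e₂) '' {x : S | polar q x e₁ = 0 ∧ polar q x e₂ = 0},
        (polar q x e₁ = 0 ∧ polar q x e₂ = 0) ∧ e₂ * x = 0 ∧ x * e₁ = 0) := by
  have pzero : ∀ a : S, polar q 0 a = 0 := by
    intro a; simp [polar]
  have lin1 : ∀ x y z : S, polar q (x*y) (z*y) = polar q x z * q y := by
    intro x y z
    simp only [polar, ← add_mul, hq]
    ring
  have lin3 : ∀ x y z w : S,
      polar q (x*y) (z*w) + polar q (x*w) (z*y) = polar q x z * polar q y w := by
    intro x y z w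
    have h := lin1 x (y + w) z
    rw [mul_add, mul_add, polar_add_left, polar_add_right, polar_add_right] at h
    have hy := lin1 x y z
    have hw := lin1 x w z
    have hpw : q (y + w) = q y + q w + polar q y w := by simp [polar]
    rw [hpw] at h
    linear_combination h - hy - hw
  have key : ∀ u v : S, (∀ w, polar q u w = polar q v w) → u = v := by
    intro u v h
    have h0 : u - v = 0 := by
      apply hnd.1
      intro n
      simp only [polarBilin_apply_apply, polar_sub_left, h n, sub_self]
    exact sub_eq_zero.mp h0
  -- Identity I: (x*y)*z + (z*y)*x = ⟨x,z⟩ • y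
  have idI : ∀ x y z : S, (x*y)*z + (z*y)*x = polar q x z • y := by
    intro x y z
    apply key
    intro w
    have a1 : polar q ((x*y)*z) w = polar q (x*y) (z*w) := by
      rw [hsym (x*y) z w]; exact polar_comm q _ _
    have a2 : polar q ((z*y)*x) w = polar q (x*w) (z*y) := by
      rw [hsym (z*y) x w]
    rw [polar_add_left, polar_smul_left, a1, a2]
    exact lin3 x y z w
  -- Identity II: x*(y*z) + z*(y*x) = ⟨x,z⟩ • y
  have idII : ∀ x y z : S, x*(y*z) + z*(y*x) = polar q x z • y := by
    intro x y z
    apply key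
    intro w
    rw [polar_add_left, polar_smul_left, smul_eq_mul]
    have a1 : polar q (x*(y*z)) w = polar q (y*z) (w*x) := by
      rw [hsym x (y*z) w, hsym (y*z) w x]; exact polar_comm q _ _
    have a2 : polar q (z*(y*x)) w = polar q (y*x) (w*z) := by
      rw [hsym z (y*x) w, hsym (y*x) w z]; exact polar_comm q _ _
    rw [a1, a2]
    have h3 := lin3 y z w x
    rw [polar_comm q z x] at h3
    linear_combination h3
  have pself1 : polar q e₁ e₁ = 0 := by
    rw [polar_self, hq1, smul_zero]
  have pself2 : polar q e₂ e₂ = 0 := by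
    rw [polar_self, hq2, smul_zero]
  have two_kill : ∀ v : S, v + v = 0 → v = 0 := by
    intro v hv
    have : (2 : F) • v = 0 := by rw [two_smul]; exact hv
    rcases smul_eq_zero.mp this with h | h
    · exact absurd h h2
    · exact h
  constructor
  · rintro x ⟨a, ⟨ha1, ha2⟩, rfl⟩
    refine ⟨⟨?_, ?_⟩, ?_, ?_⟩
    · rw [hsym a e₁ e₁, h11, polar_comm]; exact ha2
    · rw [hsym a e₁ e₂, h12]; exact pzero a
    · apply two_kill
      have := idII e₁ a e₁
      rwa [pself1, zero_smul] at this
    · have := idI a e₁ e₂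
      rwa [h21, zero_mul, add_zero, ha2, zero_smul] at this
  · rintro x ⟨a, ⟨ha1, ha2⟩, rfl⟩
    refine ⟨⟨?_, ?_⟩, ?_, ?_⟩
    · rw [hsym a e₂ e₁, h21]; exact pzero a
    · rw [hsym a e₂ e₂, h22, polar_comm]; exact ha1
    · apply two_kill
      have := idII e₂ a e₂
      rwa [pself2, zero_smul] at this
    · have := idI a e₂ e₁
      rwa [h12, zero_mul, add_zero, ha1, zero_smul] at this
end

section
/- With the hypotheses of the previous setting (symmetric composition algebra with para-hyperbolic pair e₁,e₂ and L₀ the orthogonal complement of span(e₁,e₂)), every x ∈ L₀ satisfies x = (e₁⋆x)⋆e₂ + (e₂⋆x)⋆e₁; hence L₀ = L₀⋆e₁ + L₀⋆e₂. -/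
open QuadraticMap

/-- Every `x ∈ L₀` satisfies `x = (e₁⋆x)⋆e₂ + (e₂⋆x)⋆e₁`;
hence `L₀ = L₀⋆e₁ + L₀⋆e₂`. -/
theorem para_hyperbolic_decomposition (F S : Type*) [Field F] [NonUnitalNonAssocRing S] [Module F S]
    [SMulCommClass F S S] [IsScalarTower F S S]
    (h2 : (2 : F) ≠ 0) (q : QuadraticForm F S)
    (hnd : LinearMap.BilinForm.Nondegenerate (polarBilin q))
    (hq : ∀ x y : S, q (x * y) = q x * q y)
    (hsym : ∀ x y z : S, polar q (x * y) z = polar q (y * z) x)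
    (e₁ e₂ : S) (h11 : e₁ * e₁ = e₂) (h22 : e₂ * e₂ = e₁)
    (h12 : e₁ * e₂ = 0) (h21 : e₂ * e₁ = 0)
    (hq1 : q e₁ = 0) (hq2 : q e₂ = 0) (hpol : polar q e₁ e₂ = 1) :
    (∀ x ∈ {x : S | polar q x e₁ = 0 ∧ polar q x e₂ = 0},
        x = (e₁ * x) * e₂ + (e₂ * x) * e₁) ∧
    {x : S | polar q x e₁ = 0 ∧ polar q x e₂ = 0}
      = {z : S | ∃ a ∈ (fun w => w * e₁) '' {x : S | polar q x e₁ = 0 ∧ polar q x e₂ = 0},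
          ∃ b ∈ (fun w => w * e₂) '' {x : S | polar q x e₁ = 0 ∧ polar q x e₂ = 0},
            z = a + b} := by
  have hcomm : ∀ a b : S, polar q a b = polar q b a := fun a b => polar_comm _ a b
  have hassoc : ∀ x y z : S, polar q (x * y) z = polar q x (y * z) := by
    intro x y z; rw [hsym, hcomm]
  -- linearization of hq in the first variable
  have hlin1 : ∀ x y z : S, polar q (x * y) (z * y) = polar q x z * q y := by
    intro x y z
    have h := hq (x + z) y
    rw [add_mul] at h
    have e1 : polar q (x * y) (z * y) = q (x * y + z * y) - q (x * y) - q (z * y) := rfl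
    have e2 : polar q x z = q (x + z) - q x - q z := rfl
    rw [e1, e2]
    linear_combination h - hq x y - hq z y
  -- full linearization
  have hlin2 : ∀ x y z w : S,
      polar q (x * y) (z * w) + polar q (x * w) (z * y) = polar q x z * polar q y w := by
    intro x y z w
    have h := hlin1 x (y + w) z
    rw [mul_add, mul_add, polar_add_left, polar_add_right, polar_add_right] at h
    have hy : q (y + w) = polar q y w + q y + q w := by
      have h' : polar q y w = q (y + w) - q y - q w := rfl
      rw [h']; ring
    linear_combination h - hlin1 x y z - hlin1 x w z + polar q x z * hy
  -- the key identity
  have key : ∀ x y z : S, (x * y) * z + (z * y) * x = polar q x z • y := by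
    intro x y z
    have h0 : (x * y) * z + (z * y) * x - polar q x z • y = 0 := by
      apply hnd.1
      intro w
      simp only [polarBilin_apply_apply, polar_sub_left, polar_add_left, polar_smul_left,
        smul_eq_mul]
      rw [hassoc (x * y) z w, hassoc (z * y) x w]
      linear_combination hlin2 x y z w + hcomm (z * y) (x * w)
    have := sub_eq_zero.mp h0
    exact this
  have main : ∀ x : S, x = (e₁ * x) * e₂ + (e₂ * x) * e₁ := by
    intro x
    have h := key e₁ x e₂
    rw [hpol, one_smul] at h
    exact h.symm
  constructor
  · intro x _; exact main x
  · ext z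
    simp only [Set.mem_setOf_eq, Set.mem_image]
    constructor
    · rintro ⟨hz1, hz2⟩
      refine ⟨(e₂ * z) * e₁, ⟨e₂ * z, ⟨?_, ?_⟩, rfl⟩,
        (e₁ * z) * e₂, ⟨e₁ * z, ⟨?_, ?_⟩, rfl⟩, ?_⟩
      · rw [hsym, hsym, h12, polar_zero_left]
      · rw [hsym, hsym, h22, hcomm]; exact hz1
      · rw [hsym, hsym, h11, hcomm]; exact hz2
      · rw [hsym, hsym, h21, polar_zero_left]
      · rw [add_comm]; exact main z
    · rintro ⟨a, ⟨w₁, ⟨hw11, hw12⟩, rfl⟩, b, ⟨w₂, ⟨hw21, hw22⟩, rfl⟩, rfl⟩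
      constructor
      · rw [polar_add_left, hsym, h11, hsym, h21, polar_zero_left, add_zero, hcomm]
        exact hw12
      · rw [polar_add_left, hsym, h12, polar_zero_left, zero_add, hsym, h22, hcomm]
        exact hw21
end

section
/- The standard lattice 𝕃₂ = k[[t]]⟨e₁, e₂, t·u₁, u₂, u₃, v₁, t·v₂, v₃⟩ in the split para-octonion algebra over k((t)) is closed under ⋆, contains the para-unit, satisfies 𝕃₂ ⊊ 𝕃₂^∨ ⊊ t⁻¹𝕃₂, and 𝕃₂^∨ ⋆ 𝕃₂^∨ = t⁻¹𝕃₂, where 𝕃₂^∨ = {x : ⟨x, 𝕃₂⟩ ⊆ k[[t]]}. -/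
noncomputable section

variable (k : Type*) [Field k]

/-- The split para-octonion algebra over `k((t))`, coordinatized by the standard basis
`e₁, e₂, u₁, u₂, u₃, v₁, v₂, v₃` (indices `0,…,7`). -/
abbrev C8 := Fin 8 → LaurentSeries k

/-- The standard basis vectors. -/
def E (n : Fin 8) : C8 k := Pi.single n 1

/-- Structure constants of the para-octonion multiplication `⋆` (Table 1):
`e₁⋆e₁=e₂`, `e₂⋆e₂=e₁`, `e₁⋆e₂=e₂⋆e₁=0`, `e₂⋆uᵢ=uᵢ⋆e₁=−uᵢ`, `e₁⋆vᵢ=vᵢ⋆e₂=−vᵢ`,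
`uᵢ⋆vⱼ=−δᵢⱼe₁`, `vᵢ⋆uⱼ=−δᵢⱼe₂`, `uᵢ⋆uⱼ=εᵢⱼₗvₗ`, `vᵢ⋆vⱼ=εᵢⱼₗuₗ`. -/
def bmul (i j : Fin 8) : C8 k :=
  match i.1, j.1 with
  | 0, 0 => E k 1
  | 1, 1 => E k 0
  | 1, 2 => -E k 2 | 1, 3 => -E k 3 | 1, 4 => -E k 4
  | 2, 0 => -E k 2 | 3, 0 => -E k 3 | 4, 0 => -E k 4
  | 0, 5 => -E k 5 | 0, 6 => -E k 6 | 0, 7 => -E k 7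
  | 5, 1 => -E k 5 | 6, 1 => -E k 6 | 7, 1 => -E k 7
  | 2, 5 => -E k 0 | 3, 6 => -E k 0 | 4, 7 => -E k 0
  | 5, 2 => -E k 1 | 6, 3 => -E k 1 | 7, 4 => -E k 1
  | 2, 3 => E k 7 | 3, 2 => -E k 7
  | 3, 4 => E k 5 | 4, 3 => -E k 5
  | 4, 2 => E k 6 | 2, 4 => -E k 6
  | 5, 6 => E k 4 | 6, 5 => -E k 4
  | 6, 7 => E k 2 | 7, 6 => -E k 2
  | 7, 5 => E k 3 | 5, 7 => -E k 3
  | _, _ => 0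

/-- The para-octonion multiplication `⋆`, extended bilinearly from the table. -/
def star8 (x y : C8 k) : C8 k := ∑ i, ∑ j, (x i * y j) • bmul k i j

/-- The bilinear form: `⟨e₁,e₂⟩ = 1`, `⟨uᵢ,vⱼ⟩ = δᵢⱼ`, all other pairings `0`. -/
def bf8 (x y : C8 k) : LaurentSeries k :=
  x 0 * y 1 + x 1 * y 0 + x 2 * y 5 + x 5 * y 2 + x 3 * y 6 + x 6 * y 3
    + x 4 * y 7 + x 7 * y 4

/-- The uniformizer `t` of `k[[t]]`, viewed in `k((t))`. -/
def tK : LaurentSeries k := algebraMap (PowerSeries k) (LaurentSeries k) PowerSeries.X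

/-- The dual lattice `L^∨ = {x : ⟨x, L⟩ ⊆ k[[t]]}`. -/
def dualL (L : Submodule (PowerSeries k) (C8 k)) : Submodule (PowerSeries k) (C8 k) :=
  Submodule.span (PowerSeries k)
    {x | ∀ y ∈ L, bf8 k x y ∈ Set.range (algebraMap (PowerSeries k) (LaurentSeries k))}

/-- The lattice `t⁻¹L`. -/
def tinvL (L : Submodule (PowerSeries k) (C8 k)) : Submodule (PowerSeries k) (C8 k) :=
  Submodule.span (PowerSeries k) ((fun x => (tK k)⁻¹ • x) '' (L : Set (C8 k)))

/-- The standard lattice `𝕃₂ = k[[t]]⟨e₁, e₂, t·u₁, u₂, u₃, v₁, t·v₂, v₃⟩`. -/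
def L2 : Submodule (PowerSeries k) (C8 k) :=
  Submodule.span (PowerSeries k)
    {E k 0, E k 1, tK k • E k 2, E k 3, E k 4, E k 5, tK k • E k 6, E k 7}

local notation "ι" => algebraMap (PowerSeries k) (LaurentSeries k)

def latt (c : Fin 8 → LaurentSeries k) : Submodule (PowerSeries k) (C8 k) :=
  Submodule.span (PowerSeries k) (Set.range fun i => c i • E k i)

lemma single_case (c : Fin 8 → LaurentSeries k) (m : Fin 8) (s : LaurentSeries k)
    (a : PowerSeries k) (h : s = ι a * c m) (i : Fin 8) :
    ∃ b : PowerSeries k, (s • E k m) i = ι b * c i := by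
  by_cases hi : i = m
  · subst hi; exact ⟨a, by simp [E, h]⟩
  · exact ⟨0, by simp [E, Pi.single_eq_of_ne hi]⟩

lemma mem_latt (c : Fin 8 → LaurentSeries k) (x : C8 k) :
    x ∈ latt k c ↔ ∀ i, ∃ a : PowerSeries k, x i = ι a * c i := by
  constructor
  · intro hx
    induction hx using Submodule.span_induction with
    | mem v hv =>
      obtain ⟨m, rfl⟩ := hv
      exact single_case k c m _ 1 (by simp)
    | zero => exact fun i => ⟨0, by simp⟩
    | add x y hx hy ihx ihy =>
      intro i
      obtain ⟨a, ha⟩ := ihx i; obtain ⟨b, hb⟩ := ihy i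
      exact ⟨a + b, by simp [ha, hb, add_mul]⟩
    | smul r x hx ih =>
      intro i
      obtain ⟨a, ha⟩ := ih i
      exact ⟨r * a, by simp [Pi.smul_apply, Algebra.smul_def, ha, mul_assoc]⟩
  · intro h
    choose a ha using h
    have hx : x = ∑ i, a i • (c i • E k i) := by
      funext j
      simp only [Finset.sum_apply, Pi.smul_apply, Algebra.smul_def, E, smul_eq_mul,
        Pi.single_apply]
      rw [Finset.sum_eq_single j]
      · simp [ha j]
      · intro i _ hij; simp [Ne.symm hij]
      · simp
    rw [hx]
    exact Submodule.sum_mem _ fun i _ =>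
      Submodule.smul_mem _ _ (Submodule.subset_span ⟨i, rfl⟩)

lemma smul_single_mem (c : Fin 8 → LaurentSeries k) (m : Fin 8) (s : LaurentSeries k)
    (a : PowerSeries k) (h : s = ι a * c m) : s • E k m ∈ latt k c :=
  (mem_latt k c _).2 (single_case k c m s a h)

def cL2 : Fin 8 → LaurentSeries k := fun i => match i with
  | 2 => tK k | 6 => tK k | _ => 1

def cD : Fin 8 → LaurentSeries k := fun i => match i with
  | 3 => (tK k)⁻¹ | 5 => (tK k)⁻¹ | _ => 1

def cT : Fin 8 → LaurentSeries k := fun i => match i with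
  | 2 => 1 | 6 => 1 | _ => (tK k)⁻¹

lemma tK_ne_zero : tK k ≠ 0 := by
  intro h
  have := (map_eq_zero_iff _ (IsFractionRing.injective (PowerSeries k) (LaurentSeries k))).1 h
  exact PowerSeries.X_ne_zero this

lemma tK_mul_inv : tK k * (tK k)⁻¹ = 1 := mul_inv_cancel₀ (tK_ne_zero k)
lemma inv_mul_tK : (tK k)⁻¹ * tK k = 1 := inv_mul_cancel₀ (tK_ne_zero k)

lemma not_unit (a : PowerSeries k) : ι a * tK k ≠ 1 := by
  intro h
  rw [show tK k = ι PowerSeries.X from rfl, ← map_mul, ← map_one ι] at h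
  have := IsFractionRing.injective (PowerSeries k) (LaurentSeries k) h
  have h0 := congrArg (PowerSeries.constantCoeff : PowerSeries k →+* k) this
  simp [PowerSeries.constantCoeff_X] at h0

lemma L2_eq : L2 k = latt k (cL2 k) := by
  have h1 : ∀ m : Fin 8, cL2 k m = 1 → ∀ v ∈ ({E k 0, E k 1, tK k • E k 2, E k 3, E k 4,
      E k 5, tK k • E k 6, E k 7} : Set (C8 k)), v = E k m →
      v ∈ latt k (cL2 k) := by
    intro m hm v _ hv
    rw [hv, ← one_smul (LaurentSeries k) (E k m), ← hm]
    exact Submodule.subset_span ⟨m, rfl⟩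
  apply le_antisymm <;> rw [L2, latt] <;> apply Submodule.span_le.2
  · rintro x (rfl|rfl|rfl|rfl|rfl|rfl|rfl|rfl)
    · exact h1 0 rfl _ (.inl rfl) rfl
    · exact h1 1 rfl _ (.inr (.inl rfl)) rfl
    · exact Submodule.subset_span ⟨2, rfl⟩
    · exact h1 3 rfl _ (by right; right; right; left; rfl) rfl
    · exact h1 4 rfl _ (by right; right; right; right; left; rfl) rfl
    · exact h1 5 rfl _ (by right; right; right; right; right; left; rfl) rfl
    · exact Submodule.subset_span ⟨6, rfl⟩
    · exact h1 7 rfl _ (by right; right; right; right; right; right; right; rfl) rfl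
  · rintro x ⟨i, rfl⟩
    fin_cases i
    · exact Submodule.subset_span (show (1 : LaurentSeries k) • E k 0 ∈ _ by
        rw [one_smul]; exact .inl rfl)
    · exact Submodule.subset_span (show (1 : LaurentSeries k) • E k 1 ∈ _ by
        rw [one_smul]; exact .inr (.inl rfl))
    · exact Submodule.subset_span (show tK k • E k 2 ∈ _ from .inr (.inr (.inl rfl)))
    · exact Submodule.subset_span (show (1 : LaurentSeries k) • E k 3 ∈ _ by
        rw [one_smul]; exact .inr (.inr (.inr (.inl rfl))))
    · exact Submodule.subset_span (show (1 : LaurentSeries k) • E k 4 ∈ _ by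
        rw [one_smul]; exact .inr (.inr (.inr (.inr (.inl rfl)))))
    · exact Submodule.subset_span (show (1 : LaurentSeries k) • E k 5 ∈ _ by
        rw [one_smul]; exact .inr (.inr (.inr (.inr (.inr (.inl rfl))))))
    · exact Submodule.subset_span (show tK k • E k 6 ∈ _ from
        .inr (.inr (.inr (.inr (.inr (.inr (.inl rfl)))))))
    · exact Submodule.subset_span (show (1 : LaurentSeries k) • E k 7 ∈ _ by
        rw [one_smul]; exact .inr (.inr (.inr (.inr (.inr (.inr (.inr rfl)))))))

lemma mem_L2_iff (x : C8 k) :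
    x ∈ L2 k ↔ ∀ i, ∃ a : PowerSeries k, x i = ι a * cL2 k i := by
  rw [L2_eq]; exact mem_latt k _ x

lemma gen_mem (c : Fin 8 → LaurentSeries k) (m : Fin 8) : c m • E k m ∈ latt k c :=
  Submodule.subset_span ⟨m, rfl⟩

lemma dual_set_eq :
    {x : C8 k | ∀ y ∈ L2 k, bf8 k x y ∈ Set.range ι} = ↑(latt k (cD k)) := by
  ext x
  simp only [Set.mem_setOf_eq, SetLike.mem_coe, mem_latt]
  constructor
  · intro h
    have g : ∀ m : Fin 8, cL2 k m • E k m ∈ L2 k := by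
      intro m; rw [L2_eq]; exact gen_mem k _ m
    have hc : ∀ m : Fin 8, bf8 k x (cL2 k m • E k m) ∈ Set.range ι := fun m => h _ (g m)
    intro i
    fin_cases i
    · obtain ⟨a, ha⟩ := hc 1
      refine ⟨a, ?_⟩
      simp only [bf8, E, Pi.smul_apply, smul_eq_mul, Pi.single_apply, show cL2 k 1 = 1 from rfl] at ha
      simp at ha
      simp [show cD k 0 = 1 from rfl, ← ha]
    · obtain ⟨a, ha⟩ := hc 0
      refine ⟨a, ?_⟩
      simp only [bf8, E, Pi.smul_apply, smul_eq_mul, Pi.single_apply, show cL2 k 0 = 1 from rfl] at ha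
      simp at ha
      simp [show cD k 1 = 1 from rfl, ← ha]
    · obtain ⟨a, ha⟩ := hc 5
      refine ⟨a, ?_⟩
      simp only [bf8, E, Pi.smul_apply, smul_eq_mul, Pi.single_apply, show cL2 k 5 = 1 from rfl] at ha
      simp at ha
      simp [show cD k 2 = 1 from rfl, ← ha]
    · obtain ⟨a, ha⟩ := hc 6
      refine ⟨a, ?_⟩
      simp only [bf8, E, Pi.smul_apply, smul_eq_mul, Pi.single_apply, show cL2 k 6 = tK k from rfl] at ha
      simp at ha
      have ha' : ι a = x 3 * tK k := ha
      show x 3 = ι a * cD k 3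
      rw [show cD k 3 = (tK k)⁻¹ from rfl, ha', mul_assoc, tK_mul_inv, mul_one]
    · obtain ⟨a, ha⟩ := hc 7
      refine ⟨a, ?_⟩
      simp only [bf8, E, Pi.smul_apply, smul_eq_mul, Pi.single_apply, show cL2 k 7 = 1 from rfl] at ha
      simp at ha
      simp [show cD k 4 = 1 from rfl, ← ha]
    · obtain ⟨a, ha⟩ := hc 2
      refine ⟨a, ?_⟩
      simp only [bf8, E, Pi.smul_apply, smul_eq_mul, Pi.single_apply, show cL2 k 2 = tK k from rfl] at ha
      simp at ha
      have ha' : ι a = x 5 * tK k := ha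
      show x 5 = ι a * cD k 5
      rw [show cD k 5 = (tK k)⁻¹ from rfl, ha', mul_assoc, tK_mul_inv, mul_one]
    · obtain ⟨a, ha⟩ := hc 3
      refine ⟨a, ?_⟩
      simp only [bf8, E, Pi.smul_apply, smul_eq_mul, Pi.single_apply, show cL2 k 3 = 1 from rfl] at ha
      simp at ha
      simp [show cD k 6 = 1 from rfl, ← ha]
    · obtain ⟨a, ha⟩ := hc 4
      refine ⟨a, ?_⟩
      simp only [bf8, E, Pi.smul_apply, smul_eq_mul, Pi.single_apply, show cL2 k 4 = 1 from rfl] at ha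
      simp at ha
      simp [show cD k 7 = 1 from rfl, ← ha]
  · intro hx y hy
    choose a ha using hx
    rw [mem_L2_iff] at hy
    choose b hb using hy
    refine ⟨a 0 * b 1 + a 1 * b 0 + a 2 * b 5 + a 5 * b 2 + a 3 * b 6 + a 6 * b 3
      + a 4 * b 7 + a 7 * b 4, ?_⟩
    simp only [bf8, ha 0, ha 1, ha 2, ha 3, ha 4, ha 5, ha 6, ha 7,
      hb 0, hb 1, hb 2, hb 3, hb 4, hb 5, hb 6, hb 7, map_add, map_mul]
    simp only [show cD k 0 = 1 from rfl, show cD k 1 = 1 from rfl, show cD k 2 = 1 from rfl,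
      show cD k 3 = (tK k)⁻¹ from rfl, show cD k 4 = 1 from rfl, show cD k 5 = (tK k)⁻¹ from rfl,
      show cD k 6 = 1 from rfl, show cD k 7 = 1 from rfl,
      show cL2 k 0 = 1 from rfl, show cL2 k 1 = 1 from rfl, show cL2 k 2 = tK k from rfl,
      show cL2 k 3 = 1 from rfl, show cL2 k 4 = 1 from rfl, show cL2 k 5 = 1 from rfl,
      show cL2 k 6 = tK k from rfl, show cL2 k 7 = 1 from rfl]
    have key : ∀ p q : LaurentSeries k, p * (tK k)⁻¹ * (q * tK k) = p * q := by
      intro p q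
      rw [mul_assoc, mul_comm ((tK k)⁻¹), mul_assoc, tK_mul_inv k, mul_one]
    simp only [mul_one, key]

lemma dualL_eq : dualL k (L2 k) = latt k (cD k) := by
  rw [dualL, dual_set_eq]; exact Submodule.span_eq _

lemma tinvL_eq : tinvL k (L2 k) = latt k (cT k) := by
  have himg : (fun x => (tK k)⁻¹ • x) '' (L2 k : Set (C8 k)) = ↑(latt k (cT k)) := by
    ext z
    constructor
    · rintro ⟨x, hx, rfl⟩
      rw [SetLike.mem_coe, mem_latt]
      rw [SetLike.mem_coe, mem_L2_iff] at hx
      choose b hb using hx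
      intro i
      refine ⟨b i, ?_⟩
      show ((tK k)⁻¹ • x) i = ι (b i) * cT k i
      have : ((tK k)⁻¹ • x) i = (tK k)⁻¹ * x i := rfl
      rw [this, hb i]
      fin_cases i
      · show (tK k)⁻¹ * (ι (b 0) * 1) = ι (b 0) * (tK k)⁻¹; ring
      · show (tK k)⁻¹ * (ι (b 1) * 1) = ι (b 1) * (tK k)⁻¹; ring
      · show (tK k)⁻¹ * (ι (b 2) * tK k) = ι (b 2) * 1
        rw [mul_comm ((tK k)⁻¹), mul_assoc, tK_mul_inv k]
      · show (tK k)⁻¹ * (ι (b 3) * 1) = ι (b 3) * (tK k)⁻¹; ring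
      · show (tK k)⁻¹ * (ι (b 4) * 1) = ι (b 4) * (tK k)⁻¹; ring
      · show (tK k)⁻¹ * (ι (b 5) * 1) = ι (b 5) * (tK k)⁻¹; ring
      · show (tK k)⁻¹ * (ι (b 6) * tK k) = ι (b 6) * 1
        rw [mul_comm ((tK k)⁻¹), mul_assoc, tK_mul_inv k]
      · show (tK k)⁻¹ * (ι (b 7) * 1) = ι (b 7) * (tK k)⁻¹; ring
    · intro hz
      refine ⟨tK k • z, ?_, ?_⟩
      · rw [SetLike.mem_coe, mem_latt] at hz
        choose b hb using hz
        rw [SetLike.mem_coe, mem_L2_iff]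
        intro i
        refine ⟨b i, ?_⟩
        have : (tK k • z) i = tK k * z i := rfl
        rw [this, hb i]
        fin_cases i
        · show tK k * (ι (b 0) * (tK k)⁻¹) = ι (b 0) * 1
          rw [mul_comm (tK k), mul_assoc, inv_mul_tK k]
        · show tK k * (ι (b 1) * (tK k)⁻¹) = ι (b 1) * 1
          rw [mul_comm (tK k), mul_assoc, inv_mul_tK k]
        · show tK k * (ι (b 2) * 1) = ι (b 2) * tK k; ring
        · show tK k * (ι (b 3) * (tK k)⁻¹) = ι (b 3) * 1
          rw [mul_comm (tK k), mul_assoc, inv_mul_tK k]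
        · show tK k * (ι (b 4) * (tK k)⁻¹) = ι (b 4) * 1
          rw [mul_comm (tK k), mul_assoc, inv_mul_tK k]
        · show tK k * (ι (b 5) * (tK k)⁻¹) = ι (b 5) * 1
          rw [mul_comm (tK k), mul_assoc, inv_mul_tK k]
        · show tK k * (ι (b 6) * 1) = ι (b 6) * tK k; ring
        · show tK k * (ι (b 7) * (tK k)⁻¹) = ι (b 7) * 1
          rw [mul_comm (tK k), mul_assoc, inv_mul_tK k]
      · show (tK k)⁻¹ • tK k • z = z
        exact inv_smul_smul₀ (tK_ne_zero k) z
  rw [tinvL, himg]; exact Submodule.span_eq _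

lemma latt_mono (c c' : Fin 8 → LaurentSeries k)
    (h : ∀ i, ∃ a : PowerSeries k, c i = ι a * c' i) : latt k c ≤ latt k c' := by
  intro x hx
  rw [mem_latt] at hx ⊢
  intro i
  obtain ⟨b, hb⟩ := hx i
  obtain ⟨a, ha⟩ := h i
  exact ⟨b * a, by rw [hb, ha, map_mul, mul_assoc]⟩

lemma one_eq_X_mul_inv : (1 : LaurentSeries k) = ι PowerSeries.X * (tK k)⁻¹ := by
  rw [show (ι PowerSeries.X : LaurentSeries k) = tK k from rfl, tK_mul_inv k]

lemma one_eq_one_mul_one : (1 : LaurentSeries k) = ι 1 * 1 := by simp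

lemma tK_eq_X_mul_one : tK k = ι PowerSeries.X * 1 := by rw [mul_one]; rfl

lemma inv_eq_one_mul_inv : ((tK k)⁻¹ : LaurentSeries k) = ι 1 * (tK k)⁻¹ := by simp

lemma L2_le_dual : latt k (cL2 k) ≤ latt k (cD k) := by
  apply latt_mono
  intro i
  fin_cases i
  · exact ⟨1, one_eq_one_mul_one k⟩
  · exact ⟨1, one_eq_one_mul_one k⟩
  · exact ⟨PowerSeries.X, tK_eq_X_mul_one k⟩
  · exact ⟨PowerSeries.X, one_eq_X_mul_inv k⟩
  · exact ⟨1, one_eq_one_mul_one k⟩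
  · exact ⟨PowerSeries.X, one_eq_X_mul_inv k⟩
  · exact ⟨PowerSeries.X, tK_eq_X_mul_one k⟩
  · exact ⟨1, one_eq_one_mul_one k⟩

lemma dual_le_tinv : latt k (cD k) ≤ latt k (cT k) := by
  apply latt_mono
  intro i
  fin_cases i
  · exact ⟨PowerSeries.X, one_eq_X_mul_inv k⟩
  · exact ⟨PowerSeries.X, one_eq_X_mul_inv k⟩
  · exact ⟨1, one_eq_one_mul_one k⟩
  · exact ⟨1, inv_eq_one_mul_inv k⟩
  · exact ⟨PowerSeries.X, one_eq_X_mul_inv k⟩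
  · exact ⟨1, inv_eq_one_mul_inv k⟩
  · exact ⟨1, one_eq_one_mul_one k⟩
  · exact ⟨PowerSeries.X, one_eq_X_mul_inv k⟩

lemma E2_mem_dual : E k 2 ∈ latt k (cD k) := by
  have := gen_mem k (cD k) 2
  rwa [show cD k 2 = 1 from rfl, one_smul] at this

lemma E2_not_mem_L2 : E k 2 ∉ L2 k := by
  rw [mem_L2_iff]
  intro h
  obtain ⟨a, ha⟩ := h 2
  rw [show (E k 2) 2 = 1 from by simp [E], show cL2 k 2 = tK k from rfl] at ha
  exact not_unit k a ha.symm

lemma tE0_mem_tinv : (tK k)⁻¹ • E k 0 ∈ latt k (cT k) := gen_mem k (cT k) 0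

lemma tE0_not_mem_dual : (tK k)⁻¹ • E k 0 ∉ latt k (cD k) := by
  rw [mem_latt]
  intro h
  obtain ⟨a, ha⟩ := h 0
  rw [show ((tK k)⁻¹ • E k 0) 0 = (tK k)⁻¹ from by simp [E], show cD k 0 = 1 from rfl,
    mul_one] at ha
  apply not_unit k a
  rw [← ha, inv_mul_tK k]

lemma star_single (c d : LaurentSeries k) (i j : Fin 8) :
    star8 k (c • E k i) (d • E k j) = (c * d) • bmul k i j := by
  unfold star8
  have h1 : ∀ i' ≠ i, (∑ j', ((c • E k i) i' * (d • E k j) j') • bmul k i' j') = 0 := by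
    intro i' hi'
    have h : (c • E k i) i' = 0 := by simp [E, Pi.single_eq_of_ne hi']
    simp [h]
  rw [Fintype.sum_eq_single i h1]
  have h2 : ∀ j' ≠ j, ((c • E k i) i * (d • E k j) j') • bmul k i j' = 0 := by
    intro j' hj'
    have h : (d • E k j) j' = 0 := by simp [E, Pi.single_eq_of_ne hj']
    simp [h]
  rw [Fintype.sum_eq_single j h2]
  have hc : (c • E k i) i = c := by simp [E]
  have hd : (d • E k j) j = d := by simp [E]
  rw [hc, hd]


lemma keyTE (m : Fin 8) : E k m ∈ latt k (cT k) := by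
  rw [← one_smul (LaurentSeries k) (E k m)]
  fin_cases m
  · exact smul_single_mem k _ 0 _ PowerSeries.X (one_eq_X_mul_inv k)
  · exact smul_single_mem k _ 1 _ PowerSeries.X (one_eq_X_mul_inv k)
  · exact smul_single_mem k _ 2 _ 1 (one_eq_one_mul_one k)
  · exact smul_single_mem k _ 3 _ PowerSeries.X (one_eq_X_mul_inv k)
  · exact smul_single_mem k _ 4 _ PowerSeries.X (one_eq_X_mul_inv k)
  · exact smul_single_mem k _ 5 _ PowerSeries.X (one_eq_X_mul_inv k)
  · exact smul_single_mem k _ 6 _ 1 (one_eq_one_mul_one k)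
  · exact smul_single_mem k _ 7 _ PowerSeries.X (one_eq_X_mul_inv k)

lemma keyTt (m : Fin 8) (h2 : m ≠ 2) (h6 : m ≠ 6) : (tK k)⁻¹ • E k m ∈ latt k (cT k) := by
  fin_cases m
  · exact gen_mem k (cT k) 0
  · exact gen_mem k (cT k) 1
  · exact absurd rfl h2
  · exact gen_mem k (cT k) 3
  · exact gen_mem k (cT k) 4
  · exact gen_mem k (cT k) 5
  · exact absurd rfl h6
  · exact gen_mem k (cT k) 7



lemma smul_zero_mem (c : Fin 8 → LaurentSeries k) (s : LaurentSeries k) :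
    s • (0 : C8 k) ∈ latt k c := by rw [smul_zero]; exact zero_mem _

lemma smul_single_mem_neg (c : Fin 8 → LaurentSeries k) (m : Fin 8) (s : LaurentSeries k)
    (a : PowerSeries k) (h : s = ι a * c m) : s • (-E k m) ∈ latt k c := by
  have e : s • (-E k m) = -(s • E k m) := smul_neg s (E k m)
  rw [e]; exact neg_mem (smul_single_mem k c m s a h)

lemma scA : (1 : LaurentSeries k) * 1 = ι PowerSeries.X * (tK k)⁻¹ := by
  rw [mul_one]; exact one_eq_X_mul_inv k
lemma scB : (1 : LaurentSeries k) * 1 = ι 1 * 1 := by simp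
lemma scC : (1 : LaurentSeries k) * (tK k)⁻¹ = ι 1 * (tK k)⁻¹ := by simp
lemma scD : (tK k)⁻¹ * (1 : LaurentSeries k) = ι 1 * (tK k)⁻¹ := by simp [mul_comm]
lemma scLtA : tK k * (1 : LaurentSeries k) = ι 1 * tK k := by simp
lemma scLtB : (1 : LaurentSeries k) * tK k = ι 1 * tK k := by simp
lemma scLtC : tK k * (1 : LaurentSeries k) = ι PowerSeries.X * 1 := by
  rw [mul_one, mul_one]; rfl
lemma scLtD : (1 : LaurentSeries k) * tK k = ι PowerSeries.X * 1 := by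
  rw [one_mul, mul_one]; rfl

lemma coreD (i j : Fin 8) : (cD k i * cD k j) • bmul k i j ∈ latt k (cT k) := by
  fin_cases i <;> fin_cases j
  · exact smul_single_mem k (cT k) 1 _ PowerSeries.X (scA k)
  · exact smul_zero_mem k _ _
  · exact smul_zero_mem k _ _
  · exact smul_zero_mem k _ _
  · exact smul_zero_mem k _ _
  · exact smul_single_mem_neg k (cT k) 5 _ 1 (scC k)
  · exact smul_single_mem_neg k (cT k) 6 _ 1 (scB k)
  · exact smul_single_mem_neg k (cT k) 7 _ PowerSeries.X (scA k)
  · exact smul_zero_mem k _ _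
  · exact smul_single_mem k (cT k) 0 _ PowerSeries.X (scA k)
  · exact smul_single_mem_neg k (cT k) 2 _ 1 (scB k)
  · exact smul_single_mem_neg k (cT k) 3 _ 1 (scC k)
  · exact smul_single_mem_neg k (cT k) 4 _ PowerSeries.X (scA k)
  · exact smul_zero_mem k _ _
  · exact smul_zero_mem k _ _
  · exact smul_zero_mem k _ _
  · exact smul_single_mem_neg k (cT k) 2 _ 1 (scB k)
  · exact smul_zero_mem k _ _
  · exact smul_zero_mem k _ _
  · exact smul_single_mem k (cT k) 7 _ 1 (scC k)
  · exact smul_single_mem_neg k (cT k) 6 _ 1 (scB k)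
  · exact smul_single_mem_neg k (cT k) 0 _ 1 (scC k)
  · exact smul_zero_mem k _ _
  · exact smul_zero_mem k _ _
  · exact smul_single_mem_neg k (cT k) 3 _ 1 (scD k)
  · exact smul_zero_mem k _ _
  · exact smul_single_mem_neg k (cT k) 7 _ 1 (scD k)
  · exact smul_zero_mem k _ _
  · exact smul_single_mem k (cT k) 5 _ 1 (scD k)
  · exact smul_zero_mem k _ _
  · exact smul_single_mem_neg k (cT k) 0 _ 1 (scD k)
  · exact smul_zero_mem k _ _
  · exact smul_single_mem_neg k (cT k) 4 _ PowerSeries.X (scA k)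
  · exact smul_zero_mem k _ _
  · exact smul_single_mem k (cT k) 6 _ 1 (scB k)
  · exact smul_single_mem_neg k (cT k) 5 _ 1 (scC k)
  · exact smul_zero_mem k _ _
  · exact smul_zero_mem k _ _
  · exact smul_zero_mem k _ _
  · exact smul_single_mem_neg k (cT k) 0 _ PowerSeries.X (scA k)
  · exact smul_zero_mem k _ _
  · exact smul_single_mem_neg k (cT k) 5 _ 1 (scD k)
  · exact smul_single_mem_neg k (cT k) 1 _ 1 (scD k)
  · exact smul_zero_mem k _ _
  · exact smul_zero_mem k _ _
  · exact smul_zero_mem k _ _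
  · exact smul_single_mem k (cT k) 4 _ 1 (scD k)
  · exact smul_single_mem_neg k (cT k) 3 _ 1 (scD k)
  · exact smul_zero_mem k _ _
  · exact smul_single_mem_neg k (cT k) 6 _ 1 (scB k)
  · exact smul_zero_mem k _ _
  · exact smul_single_mem_neg k (cT k) 1 _ 1 (scC k)
  · exact smul_zero_mem k _ _
  · exact smul_single_mem_neg k (cT k) 4 _ 1 (scC k)
  · exact smul_zero_mem k _ _
  · exact smul_single_mem k (cT k) 2 _ 1 (scB k)
  · exact smul_zero_mem k _ _
  · exact smul_single_mem_neg k (cT k) 7 _ PowerSeries.X (scA k)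
  · exact smul_zero_mem k _ _
  · exact smul_zero_mem k _ _
  · exact smul_single_mem_neg k (cT k) 1 _ PowerSeries.X (scA k)
  · exact smul_single_mem k (cT k) 3 _ 1 (scC k)
  · exact smul_single_mem_neg k (cT k) 2 _ 1 (scB k)
  · exact smul_zero_mem k _ _

lemma coreL (i j : Fin 8) : (cL2 k i * cL2 k j) • bmul k i j ∈ latt k (cL2 k) := by
  fin_cases i <;> fin_cases j
  · exact smul_single_mem k (cL2 k) 1 _ 1 (scB k)
  · exact smul_zero_mem k _ _
  · exact smul_zero_mem k _ _
  · exact smul_zero_mem k _ _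
  · exact smul_zero_mem k _ _
  · exact smul_single_mem_neg k (cL2 k) 5 _ 1 (scB k)
  · exact smul_single_mem_neg k (cL2 k) 6 _ 1 (scLtB k)
  · exact smul_single_mem_neg k (cL2 k) 7 _ 1 (scB k)
  · exact smul_zero_mem k _ _
  · exact smul_single_mem k (cL2 k) 0 _ 1 (scB k)
  · exact smul_single_mem_neg k (cL2 k) 2 _ 1 (scLtB k)
  · exact smul_single_mem_neg k (cL2 k) 3 _ 1 (scB k)
  · exact smul_single_mem_neg k (cL2 k) 4 _ 1 (scB k)
  · exact smul_zero_mem k _ _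
  · exact smul_zero_mem k _ _
  · exact smul_zero_mem k _ _
  · exact smul_single_mem_neg k (cL2 k) 2 _ 1 (scLtA k)
  · exact smul_zero_mem k _ _
  · exact smul_zero_mem k _ _
  · exact smul_single_mem k (cL2 k) 7 _ PowerSeries.X (scLtC k)
  · exact smul_single_mem_neg k (cL2 k) 6 _ 1 (scLtA k)
  · exact smul_single_mem_neg k (cL2 k) 0 _ PowerSeries.X (scLtC k)
  · exact smul_zero_mem k _ _
  · exact smul_zero_mem k _ _
  · exact smul_single_mem_neg k (cL2 k) 3 _ 1 (scB k)
  · exact smul_zero_mem k _ _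
  · exact smul_single_mem_neg k (cL2 k) 7 _ PowerSeries.X (scLtD k)
  · exact smul_zero_mem k _ _
  · exact smul_single_mem k (cL2 k) 5 _ 1 (scB k)
  · exact smul_zero_mem k _ _
  · exact smul_single_mem_neg k (cL2 k) 0 _ PowerSeries.X (scLtD k)
  · exact smul_zero_mem k _ _
  · exact smul_single_mem_neg k (cL2 k) 4 _ 1 (scB k)
  · exact smul_zero_mem k _ _
  · exact smul_single_mem k (cL2 k) 6 _ 1 (scLtB k)
  · exact smul_single_mem_neg k (cL2 k) 5 _ 1 (scB k)
  · exact smul_zero_mem k _ _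
  · exact smul_zero_mem k _ _
  · exact smul_zero_mem k _ _
  · exact smul_single_mem_neg k (cL2 k) 0 _ 1 (scB k)
  · exact smul_zero_mem k _ _
  · exact smul_single_mem_neg k (cL2 k) 5 _ 1 (scB k)
  · exact smul_single_mem_neg k (cL2 k) 1 _ PowerSeries.X (scLtD k)
  · exact smul_zero_mem k _ _
  · exact smul_zero_mem k _ _
  · exact smul_zero_mem k _ _
  · exact smul_single_mem k (cL2 k) 4 _ PowerSeries.X (scLtD k)
  · exact smul_single_mem_neg k (cL2 k) 3 _ 1 (scB k)
  · exact smul_zero_mem k _ _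
  · exact smul_single_mem_neg k (cL2 k) 6 _ 1 (scLtA k)
  · exact smul_zero_mem k _ _
  · exact smul_single_mem_neg k (cL2 k) 1 _ PowerSeries.X (scLtC k)
  · exact smul_zero_mem k _ _
  · exact smul_single_mem_neg k (cL2 k) 4 _ PowerSeries.X (scLtC k)
  · exact smul_zero_mem k _ _
  · exact smul_single_mem k (cL2 k) 2 _ 1 (scLtA k)
  · exact smul_zero_mem k _ _
  · exact smul_single_mem_neg k (cL2 k) 7 _ 1 (scB k)
  · exact smul_zero_mem k _ _
  · exact smul_zero_mem k _ _
  · exact smul_single_mem_neg k (cL2 k) 1 _ 1 (scB k)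
  · exact smul_single_mem k (cL2 k) 3 _ 1 (scB k)
  · exact smul_single_mem_neg k (cL2 k) 2 _ 1 (scLtB k)
  · exact smul_zero_mem k _ _

lemma star_mem (c c' : Fin 8 → LaurentSeries k)
    (hcore : ∀ i j, (c i * c j) • bmul k i j ∈ latt k c')
    {x y : C8 k} (hx : x ∈ latt k c) (hy : y ∈ latt k c) :
    star8 k x y ∈ latt k c' := by
  rw [mem_latt] at hx hy
  choose a ha using hx
  choose b hb using hy
  unfold star8
  refine Submodule.sum_mem _ fun i _ => Submodule.sum_mem _ fun j _ => ?_
  rw [ha i, hb j]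
  have e1 : (ι (a i) * c i) * (ι (b j) * c j) = ι (a i * b j) * (c i * c j) := by
    rw [map_mul]; ring
  rw [e1]
  have e2 := mul_smul (ι (a i * b j)) (c i * c j) (bmul k i j)
  rw [e2]
  have e3 := algebraMap_smul (LaurentSeries k) (a i * b j) ((c i * c j) • bmul k i j)
  rw [e3]
  exact Submodule.smul_mem _ _ (hcore i j)

set_option maxHeartbeats 1600000 in
lemma tinv_le_span :
    latt k (cT k) ≤ Submodule.span (PowerSeries k)
      (Set.image2 (star8 k) (↑(latt k (cD k)) : Set (C8 k)) ↑(latt k (cD k))) := by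
  rw [latt]
  apply Submodule.span_le.2
  rintro z ⟨m, rfl⟩
  have gmem : ∀ n : Fin 8, cD k n • E k n ∈ (↑(latt k (cD k)) : Set (C8 k)) :=
    fun n => gen_mem k (cD k) n
  have smem : ∀ p q : Fin 8, star8 k (cD k p • E k p) (cD k q • E k q) ∈
      Submodule.span (PowerSeries k)
        (Set.image2 (star8 k) (↑(latt k (cD k)) : Set (C8 k)) ↑(latt k (cD k))) :=
    fun p q => Submodule.subset_span (Set.mem_image2_of_mem (gmem p) (gmem q))
  fin_cases m
  · -- cT 0 • E 0 = -(star (cD 3 • E3) (cD 6 • E6))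
    show cT k 0 • E k 0 ∈ _
    have h2 : cT k 0 • E k 0 = -(star8 k (cD k 3 • E k 3) (cD k 6 • E k 6)) := by
      rw [star_single]
      show (tK k)⁻¹ • E k 0 = -(((tK k)⁻¹ * 1) • (-E k 0))
      have e := smul_neg ((tK k)⁻¹ * 1) (E k 0)
      rw [e, neg_neg, mul_one]
    rw [h2]; exact neg_mem (smem 3 6)
  · show cT k 1 • E k 1 ∈ _
    have h2 : cT k 1 • E k 1 = -(star8 k (cD k 6 • E k 6) (cD k 3 • E k 3)) := by
      rw [star_single]
      show (tK k)⁻¹ • E k 1 = -((1 * (tK k)⁻¹) • (-E k 1))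
      have e := smul_neg (1 * (tK k)⁻¹) (E k 1)
      rw [e, neg_neg, one_mul]
    rw [h2]; exact neg_mem (smem 6 3)
  · show cT k 2 • E k 2 ∈ _
    have h2 : cT k 2 • E k 2 = star8 k (cD k 6 • E k 6) (cD k 7 • E k 7) := by
      rw [star_single]
      show (1 : LaurentSeries k) • E k 2 = ((1 : LaurentSeries k) * 1) • E k 2
      rw [one_mul]
    rw [h2]; exact smem 6 7
  · show cT k 3 • E k 3 ∈ _
    have h2 : cT k 3 • E k 3 = star8 k (cD k 7 • E k 7) (cD k 5 • E k 5) := by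
      rw [star_single]
      show (tK k)⁻¹ • E k 3 = ((1 : LaurentSeries k) * (tK k)⁻¹) • E k 3
      rw [one_mul]
    rw [h2]; exact smem 7 5
  · show cT k 4 • E k 4 ∈ _
    have h2 : cT k 4 • E k 4 = star8 k (cD k 5 • E k 5) (cD k 6 • E k 6) := by
      rw [star_single]
      show (tK k)⁻¹ • E k 4 = ((tK k)⁻¹ * 1) • E k 4
      rw [mul_one]
    rw [h2]; exact smem 5 6
  · show cT k 5 • E k 5 ∈ _
    have h2 : cT k 5 • E k 5 = star8 k (cD k 3 • E k 3) (cD k 4 • E k 4) := by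
      rw [star_single]
      show (tK k)⁻¹ • E k 5 = ((tK k)⁻¹ * 1) • E k 5
      rw [mul_one]
    rw [h2]; exact smem 3 4
  · show cT k 6 • E k 6 ∈ _
    have h2 : cT k 6 • E k 6 = star8 k (cD k 4 • E k 4) (cD k 2 • E k 2) := by
      rw [star_single]
      show (1 : LaurentSeries k) • E k 6 = ((1 : LaurentSeries k) * 1) • E k 6
      rw [one_mul]
    rw [h2]; exact smem 4 2
  · show cT k 7 • E k 7 ∈ _
    have h2 : cT k 7 • E k 7 = star8 k (cD k 2 • E k 2) (cD k 3 • E k 3) := by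
      rw [star_single]
      show (tK k)⁻¹ • E k 7 = ((1 : LaurentSeries k) * (tK k)⁻¹) • E k 7
      rw [one_mul]
    rw [h2]; exact smem 2 3

lemma L2_lt_dual : L2 k < dualL k (L2 k) := by
  rw [dualL_eq, L2_eq, SetLike.lt_iff_le_and_exists]
  refine ⟨L2_le_dual k, E k 2, E2_mem_dual k, ?_⟩
  rw [← L2_eq]
  exact E2_not_mem_L2 k

lemma dual_lt_tinv : dualL k (L2 k) < tinvL k (L2 k) := by
  rw [dualL_eq, tinvL_eq, SetLike.lt_iff_le_and_exists]
  exact ⟨dual_le_tinv k, (tK k)⁻¹ • E k 0, tE0_mem_tinv k, tE0_not_mem_dual k⟩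


/-- The standard lattice `𝕃₂` is closed under `⋆`, contains the para-unit
`e = e₁ + e₂`, satisfies `𝕃₂ ⊊ 𝕃₂^∨ ⊊ t⁻¹𝕃₂`, and `𝕃₂^∨ ⋆ 𝕃₂^∨ = t⁻¹𝕃₂`. -/
theorem standard_lattice_type_two (k : Type*) [Field k] (h2 : (2 : k) ≠ 0) :
    (∀ x ∈ L2 k, ∀ y ∈ L2 k, star8 k x y ∈ L2 k) ∧
    (E k 0 + E k 1) ∈ L2 k ∧
    L2 k < dualL k (L2 k) ∧
    dualL k (L2 k) < tinvL k (L2 k) ∧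
    Submodule.span (PowerSeries k)
        (Set.image2 (star8 k) (dualL k (L2 k) : Set (C8 k)) (dualL k (L2 k) : Set (C8 k)))
      = tinvL k (L2 k) := by
  refine ⟨?_, ?_, L2_lt_dual k, dual_lt_tinv k, ?_⟩
  · intro x hx y hy
    rw [L2_eq] at hx hy ⊢
    exact star_mem k _ _ (coreL k) hx hy
  · exact add_mem (Submodule.subset_span (Set.mem_insert _ _))
      (Submodule.subset_span (Set.mem_insert_of_mem _ (Set.mem_insert _ _)))
  · rw [dualL_eq, tinvL_eq]
    apply le_antisymm
    · apply Submodule.span_le.2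
      rintro z ⟨x, hx, y, hy, rfl⟩
      exact star_mem k (cD k) (cT k) (coreD k) hx hy
    · exact tinv_le_span k
end
end
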